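/- Let n ≥ 1, let K, L ⊂ ℝⁿ be convex symmetric bodies, let ‖x‖_L = min{λ > 0 : x ∈ λL} be the Minkowski functional of L, let φ : [0,∞) → [0,∞) be an increasing function, and let μ be the measure with density x ↦ e^{-φ(‖x‖_L)}. If R > 0 and |K| ≤ |RL|, then μ(K) ≤ μ(RL). -/

import Mathlib

open MeasureTheory Filter Set Pointwise

theorem stmt16 (n : ℕ) (hn : 1 ≤ n)
    (K L : Set (EuclideanSpace ℝ (Fin n)))
    (hKcomp : IsCompact K) (hKconv : Convex ℝ K)
    (hKint : (interior K).Nonempty) (hKsymm : K = -K)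
    (hLcomp : IsCompact L) (hLconv : Convex ℝ L)
    (hLint : (interior L).Nonempty) (hLsymm : L = -L)
    (φ : ℝ → ℝ)
    (hmono : MonotoneOn φ (Set.Ici 0))
    (hnonneg : ∀ t ∈ Set.Ici (0 : ℝ), 0 ≤ φ t)
    (μ : Measure (EuclideanSpace ℝ (Fin n)))
    (hμ : μ = volume.withDensity fun x => ENNReal.ofReal (Real.exp (-φ (gauge L x))))
    (R : ℝ) (hR : 0 < R)
    (hvol : volume K ≤ volume (R • L)) :
    μ K ≤ μ (R • L) := by
  set f : EuclideanSpace ℝ (Fin n) → ENNReal :=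
    fun x => ENNReal.ofReal (Real.exp (-φ (gauge L x))) with hf
  -- 0 ∈ interior L
  obtain ⟨x₀, hx₀⟩ := hLint
  have hx₀' : -x₀ ∈ interior L := by
    have hopen : IsOpen (-(interior L)) := isOpen_interior.neg
    have hsub : -(interior L) ⊆ L := by
      have h := Set.neg_subset_neg.mpr (interior_subset (s := L))
      rwa [← hLsymm] at h
    exact interior_maximal hsub hopen (Set.neg_mem_neg.mpr hx₀)
  have h0 : (0 : EuclideanSpace ℝ (Fin n)) ∈ interior L := by
    have := hLconv.interior hx₀ hx₀' (by norm_num : (0:ℝ) ≤ 1/2)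
      (by norm_num : (0:ℝ) ≤ 1/2) (by norm_num)
    simpa using this
  have hL0 : (0 : EuclideanSpace ℝ (Fin n)) ∈ L := interior_subset h0
  have hLnhds : L ∈ nhds (0 : EuclideanSpace ℝ (Fin n)) := mem_interior_iff_mem_nhds.mp h0
  have habs : Absorbent ℝ L := absorbent_nhds_zero hLnhds
  -- sets
  set A := R • L with hA
  have hAmeas : MeasurableSet A := (hLcomp.smul R).isClosed.measurableSet
  have hKmeas : MeasurableSet K := hKcomp.isClosed.measurableSet
  -- gauge bounds
  have hgA : ∀ x ∈ A, gauge L x ≤ R := fun x hx => gauge_le_of_mem hR.le hx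
  have hgK : ∀ x, x ∉ A → R ≤ gauge L x := fun x hx =>
    le_gauge_of_notMem (hLconv.starConvex hL0) (habs x) hx
  -- density bounds
  have hfA : ∀ x ∈ A, ENNReal.ofReal (Real.exp (-φ R)) ≤ f x := by
    intro x hx
    exact ENNReal.ofReal_le_ofReal (Real.exp_le_exp.mpr (neg_le_neg
      (hmono (gauge_nonneg x) (Set.mem_Ici.mpr hR.le) (hgA x hx))))
  have hfK : ∀ x, x ∉ A → f x ≤ ENNReal.ofReal (Real.exp (-φ R)) := by
    intro x hx
    exact ENNReal.ofReal_le_ofReal (Real.exp_le_exp.mpr (neg_le_neg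
      (hmono (Set.mem_Ici.mpr hR.le) (gauge_nonneg x) (hgK x hx))))
  -- volumes finite
  have hvolfin : volume (K ∩ A) ≠ ⊤ :=
    ((measure_mono Set.inter_subset_left).trans_lt hKcomp.measure_lt_top).ne
  -- volume of differences
  have hvoldiff : volume (K \ A) ≤ volume (A \ K) := by
    have h1 : volume (K \ A) + volume (K ∩ A) = volume K := by
      rw [add_comm]; exact measure_inter_add_diff K hAmeas
    have h2 : volume (A \ K) + volume (A ∩ K) = volume A := by
      rw [add_comm]; exact measure_inter_add_diff A hKmeas
    rw [← ENNReal.add_le_add_iff_right hvolfin, h1]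
    calc volume K ≤ volume A := hvol
      _ = volume (A \ K) + volume (A ∩ K) := h2.symm
      _ = volume (A \ K) + volume (K ∩ A) := by rw [Set.inter_comm]
  -- compare μ on differences
  have hmudiff : μ (K \ A) ≤ μ (A \ K) := by
    rw [hμ, withDensity_apply _ (hKmeas.diff hAmeas),
      withDensity_apply _ (hAmeas.diff hKmeas)]
    calc ∫⁻ x in K \ A, f x ∂volume
        ≤ ∫⁻ _ in K \ A, ENNReal.ofReal (Real.exp (-φ R)) ∂volume :=
          setLIntegral_mono' (hKmeas.diff hAmeas) (fun x hx => hfK x hx.2)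
      _ = ENNReal.ofReal (Real.exp (-φ R)) * volume (K \ A) := setLIntegral_const _ _
      _ ≤ ENNReal.ofReal (Real.exp (-φ R)) * volume (A \ K) := by
          exact mul_le_mul_right hvoldiff _
      _ = ∫⁻ _ in A \ K, ENNReal.ofReal (Real.exp (-φ R)) ∂volume :=
          (setLIntegral_const _ _).symm
      _ ≤ ∫⁻ x in A \ K, f x ∂volume :=
          setLIntegral_mono' (hAmeas.diff hKmeas) (fun x hx => hfA x hx.1)
  calc μ K = μ (K ∩ A) + μ (K \ A) := (measure_inter_add_diff K hAmeas).symm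
    _ ≤ μ (K ∩ A) + μ (A \ K) := add_le_add_right hmudiff _
    _ = μ (A ∩ K) + μ (A \ K) := by rw [Set.inter_comm]
    _ = μ A := measure_inter_add_diff A hKmeas
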